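/- Let (M,μ), (N,ν) be measure spaces and k : N × M → [0,∞] measurable with maximal rearrangement bound k₁*(x,t) ≤ k₁*(t) where k₁*(x,·) is the rearrangement of k(x,·) on M. If f : M → [0,∞] is measurable with μ(supp f) ≤ z and ‖f‖_∞ ≤ a, then for ν-a.e. x ∈ N, Tf(x) := ∫_M k(x,y) f(y) dμ(y) ≤ a ∫_0^z k₁*(x,v) dv. -/

import Mathlib

open MeasureTheory Set ENNReal

lemma volA (c : ℝ≥0∞) : volume {s : ℝ | 0 < s ∧ ENNReal.ofReal s < c} = c := by
  by_cases hc : c = ⊤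
  · subst hc
    have : {s : ℝ | 0 < s ∧ ENNReal.ofReal s < ⊤} = Ioi 0 := by
      ext s; simp [ofReal_lt_top]
    rw [this, Real.volume_Ioi]
  · have : {s : ℝ | 0 < s ∧ ENNReal.ofReal s < c} = Ioo 0 c.toReal := by
      ext s
      simp only [mem_setOf_eq, mem_Ioo, and_congr_right_iff]
      intro hs
      rw [ENNReal.ofReal_lt_iff_lt_toReal hs.le hc]
    rw [this, Real.volume_Ioo, sub_zero, ENNReal.ofReal_toReal hc]

lemma volB {z : ℝ} (hz : 0 < z) (L : ℝ≥0∞) :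
    volume {t : ℝ | (0 < t ∧ t < z) ∧ ENNReal.ofReal t < L} = min L (ENNReal.ofReal z) := by
  by_cases hL : ENNReal.ofReal z ≤ L
  · have : {t : ℝ | (0 < t ∧ t < z) ∧ ENNReal.ofReal t < L} = Ioo 0 z := by
      ext t
      simp only [mem_setOf_eq, mem_Ioo, and_iff_left_iff_imp]
      rintro ⟨ht0, htz⟩
      exact lt_of_lt_of_le (by rwa [ENNReal.ofReal_lt_ofReal_iff hz]) hL
    rw [this, Real.volume_Ioo, sub_zero, min_eq_right hL]
  · push_neg at hL
    have hLtop : L ≠ ⊤ := (hL.trans_le le_top).ne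
    have hLz : L.toReal < z := by rwa [← ENNReal.lt_ofReal_iff_toReal_lt hLtop]
    have : {t : ℝ | (0 < t ∧ t < z) ∧ ENNReal.ofReal t < L} = Ioo 0 L.toReal := by
      ext t
      simp only [mem_setOf_eq, mem_Ioo]
      constructor
      · rintro ⟨⟨ht0, _⟩, htL⟩
        exact ⟨ht0, by rwa [ENNReal.ofReal_lt_iff_lt_toReal ht0.le hLtop] at htL⟩
      · rintro ⟨ht0, htL⟩
        exact ⟨⟨ht0, htL.trans hLz⟩, by rwa [ENNReal.ofReal_lt_iff_lt_toReal ht0.le hLtop]⟩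
    rw [this, Real.volume_Ioo, sub_zero, ENNReal.ofReal_toReal hLtop, min_eq_left hL.le]

lemma lam_rc {M : Type*} [MeasurableSpace M] (μ : Measure M) (g : M → ℝ≥0∞) {σ : ℝ≥0∞} {c : ℝ≥0∞}
    (h : c < μ {y | σ < g y}) : ∃ σ', σ < σ' ∧ c < μ {y | σ' < g y} := by
  have hσtop : σ ≠ ⊤ := by
    rintro rfl
    simp only [not_top_lt, setOf_false, measure_empty] at h
    exact (not_lt_of_ge (zero_le (a := c))) h
  have hU : {y | σ < g y} = ⋃ n : ℕ, {y | σ + ((n : ℝ≥0∞) + 1)⁻¹ < g y} := by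
    ext y
    simp only [mem_setOf_eq, mem_iUnion]
    constructor
    · intro hy
      obtain ⟨r, hr0, hr⟩ := ENNReal.lt_iff_exists_add_pos_lt.1 hy
      obtain ⟨n, hn⟩ := ENNReal.exists_inv_nat_lt (by exact_mod_cast hr0.ne' : (r : ℝ≥0∞) ≠ 0)
      refine ⟨n, lt_of_le_of_lt ?_ hr⟩
      refine add_le_add_right (le_trans ?_ hn.le) σ
      exact ENNReal.inv_le_inv.2 (by exact_mod_cast Nat.le_succ n)
    · rintro ⟨n, hn⟩
      exact lt_of_le_of_lt (le_self_add) hn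
  have hmono : Monotone (fun n : ℕ => {y | σ + ((n : ℝ≥0∞) + 1)⁻¹ < g y}) := by
    intro n m hnm y hy
    refine lt_of_le_of_lt (add_le_add_right ?_ σ) hy
    exact ENNReal.inv_le_inv.2 (by exact_mod_cast Nat.succ_le_succ hnm)
  rw [hU, hmono.directed_le.measure_iUnion] at h
  obtain ⟨n, hn⟩ := lt_iSup_iff.1 h
  exact ⟨σ + ((n : ℝ≥0∞) + 1)⁻¹, ENNReal.lt_add_right hσtop (by simp), hn⟩

lemma keyiff {M : Type*} [MeasurableSpace M] (μ : Measure M) (g : M → ℝ≥0∞) (c : ℝ≥0∞) (σ : ℝ≥0∞) :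
    σ < sInf {s : ℝ≥0∞ | μ {y | s < g y} ≤ c} ↔ c < μ {y | σ < g y} := by
  constructor
  · intro h
    by_contra hc
    push_neg at hc
    exact absurd (sInf_le (show σ ∈ {s : ℝ≥0∞ | μ {y | s < g y} ≤ c} from hc)) (not_le_of_gt h)
  · intro h
    obtain ⟨σ', hσσ', hσ'⟩ := lam_rc μ g h
    refine lt_of_lt_of_le hσσ' (le_sInf fun u hu => ?_)
    by_contra hus
    push_neg at hus
    have : μ {y | σ' < g y} ≤ μ {y | u < g y} :=
      measure_mono fun y hy => lt_of_le_of_lt hus.le hy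
    exact absurd (this.trans hu) (not_le_of_gt hσ')

/-- The Claim in the improved O'Neil lemma: if `μ(supp f) ≤ z` and `f ≤ a`, then
for `ν`-a.e. `x`, `Tf(x) = ∫_M k(x,y)f(y) dμ(y) ≤ a ∫_0^z k₁*(x,v) dv`, where
`k₁*(x,·)` is the nonincreasing rearrangement of `k(x,·)` on `(M,μ)`. -/
theorem stmt_15 {M N : Type*} [MeasurableSpace M] [MeasurableSpace N]
    (μ : Measure M) (ν : Measure N) (k : N → M → ℝ≥0∞)
    (hk : Measurable (Function.uncurry k))
    (f : M → ℝ≥0∞) (hf : Measurable f) (z a : ℝ) (hz : 0 < z) (ha : 0 ≤ a)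
    (hsupp : μ {y | f y ≠ 0} ≤ ENNReal.ofReal z)
    (hbound : ∀ᵐ y ∂μ, f y ≤ ENNReal.ofReal a) :
    ∀ᵐ x ∂ν,
      (∫⁻ y, k x y * f y ∂μ)
        ≤ ENNReal.ofReal a *
            ∫⁻ t in Ioo (0 : ℝ) z,
              sInf {s : ℝ≥0∞ | μ {y | s < k x y} ≤ ENNReal.ofReal t} := by
  refine ae_of_all _ fun x => ?_
  have hg : Measurable (k x) := hk.of_uncurry_left
  set g : M → ℝ≥0∞ := k x with hgdef
  set S : Set M := {y | f y ≠ 0} with hSdef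
  have hS : MeasurableSet S := (hf (measurableSet_singleton 0)).compl
  set G : ℝ → ℝ≥0∞ := fun t => sInf {s : ℝ≥0∞ | μ {y | s < g y} ≤ ENNReal.ofReal t} with hGdef
  -- Step 1 : reduce to the integral over S
  have step1 : (∫⁻ y, g y * f y ∂μ) ≤ ENNReal.ofReal a * ∫⁻ y in S, g y ∂μ := by
    have h1 : ∀ᵐ y ∂μ, g y * f y ≤ ENNReal.ofReal a * S.indicator g y := by
      filter_upwards [hbound] with y hy
      by_cases h : f y = 0
      · simp [h]
      · rw [Set.indicator_of_mem (show y ∈ S from h)]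
        calc g y * f y ≤ g y * ENNReal.ofReal a := mul_le_mul_right hy _
          _ = ENNReal.ofReal a * g y := mul_comm _ _
    calc (∫⁻ y, g y * f y ∂μ) ≤ ∫⁻ y, ENNReal.ofReal a * S.indicator g y ∂μ :=
          lintegral_mono_ae h1
      _ = ENNReal.ofReal a * ∫⁻ y, S.indicator g y ∂μ :=
          lintegral_const_mul _ (hg.indicator hS)
      _ = ENNReal.ofReal a * ∫⁻ y in S, g y ∂μ := by rw [lintegral_indicator hS]
  -- Step 2 : the rearrangement bound
  haveI hfin : IsFiniteMeasure (μ.restrict S) :=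
    ⟨by rw [Measure.restrict_apply_univ]; exact lt_of_le_of_lt hsupp ofReal_lt_top⟩
  -- the layer-cake indicator
  set F : M → ℝ → ℝ≥0∞ := fun y => ({s : ℝ | 0 < s ∧ ENNReal.ofReal s < g y}).indicator 1
    with hFdef
  have hmsA : ∀ c : ℝ≥0∞, MeasurableSet {s : ℝ | 0 < s ∧ ENNReal.ofReal s < c} := fun c => by
    have : {s : ℝ | 0 < s ∧ ENNReal.ofReal s < c} = Ioi 0 ∩ ENNReal.ofReal ⁻¹' (Iio c) := rfl
    rw [this]; exact measurableSet_Ioi.inter (ENNReal.measurable_ofReal measurableSet_Iio)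
  have e1 : ∀ y, g y = ∫⁻ s, F y s := fun y => by
    rw [hFdef, lintegral_indicator_one (hmsA (g y)), volA]
  have hFmeas : Measurable (Function.uncurry F) := by
    have hE : MeasurableSet {p : M × ℝ | 0 < p.2 ∧ ENNReal.ofReal p.2 < g p.1} := by
      refine MeasurableSet.inter (measurable_snd measurableSet_Ioi) ?_
      exact measurableSet_lt (α := ℝ≥0∞) (ENNReal.measurable_ofReal.comp measurable_snd)
        (hg.comp measurable_fst)
    have : Function.uncurry F =
        ({p : M × ℝ | 0 < p.2 ∧ ENNReal.ofReal p.2 < g p.1}).indicator 1 := by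
      ext p
      simp [Function.uncurry, hFdef, Set.indicator_apply]
    rw [this]
    exact measurable_one.indicator hE
  have swap1 : (∫⁻ y in S, g y ∂μ)
      = ∫⁻ s, (μ.restrict S) {y | 0 < s ∧ ENNReal.ofReal s < g y} := by
    have h0 : (∫⁻ y in S, g y ∂μ) = ∫⁻ y, ∫⁻ s, F y s ∂volume ∂(μ.restrict S) :=
      lintegral_congr fun y => e1 y
    rw [h0, lintegral_lintegral_swap hFmeas.aemeasurable]
    refine lintegral_congr fun s => ?_
    have hms : MeasurableSet {y | 0 < s ∧ ENNReal.ofReal s < g y} := by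
      by_cases hs : 0 < s
      · simp only [hs, true_and]
        exact hg measurableSet_Ioi
      · simp only [hs, false_and, setOf_false]
        exact MeasurableSet.empty
    rw [← lintegral_indicator_one (μ := μ.restrict S) hms]
    exact lintegral_congr fun y => by simp [hFdef, Set.indicator_apply]
  -- the second indicator, on (s,t)
  set F2 : ℝ → ℝ → ℝ≥0∞ := fun s =>
    ({t : ℝ | 0 < s ∧ (0 < t ∧ t < z) ∧ ENNReal.ofReal t < μ {y | ENNReal.ofReal s < g y}}).indicator 1
    with hF2def
  have hlam_meas : Measurable (fun s : ℝ => μ {y | ENNReal.ofReal s < g y}) := by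
    refine Antitone.measurable fun s1 s2 h => ?_
    exact measure_mono fun y hy => lt_of_le_of_lt (ENNReal.ofReal_le_ofReal h) hy
  have hmsB : ∀ s : ℝ, MeasurableSet
      {t : ℝ | (0 < t ∧ t < z) ∧ ENNReal.ofReal t < μ {y | ENNReal.ofReal s < g y}} := by
    intro s
    exact MeasurableSet.inter measurableSet_Ioo (ENNReal.measurable_ofReal measurableSet_Iio)
  -- pointwise bound in s
  have step2b : ∀ s : ℝ, (μ.restrict S) {y | 0 < s ∧ ENNReal.ofReal s < g y} ≤ ∫⁻ t, F2 s t := by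
    intro s
    by_cases hs : 0 < s
    · have hset : MeasurableSet {y | ENNReal.ofReal s < g y} := hg measurableSet_Ioi
      have h1 : (μ.restrict S) {y | 0 < s ∧ ENNReal.ofReal s < g y}
          = μ ({y | ENNReal.ofReal s < g y} ∩ S) := by
        simp only [hs, true_and]
        exact Measure.restrict_apply hset
      have h2 : μ ({y | ENNReal.ofReal s < g y} ∩ S)
          ≤ min (μ {y | ENNReal.ofReal s < g y}) (ENNReal.ofReal z) :=
        le_min (measure_mono inter_subset_left)
          ((measure_mono inter_subset_right).trans hsupp)
      have hseteq : {t : ℝ | 0 < s ∧ (0 < t ∧ t < z) ∧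
            ENNReal.ofReal t < μ {y | ENNReal.ofReal s < g y}}
          = {t : ℝ | (0 < t ∧ t < z) ∧ ENNReal.ofReal t < μ {y | ENNReal.ofReal s < g y}} := by
        ext t; simp [hs]
      have h3 : (∫⁻ t, F2 s t)
          = min (μ {y | ENNReal.ofReal s < g y}) (ENNReal.ofReal z) := by
        simp only [hF2def, hseteq]
        rw [lintegral_indicator_one (hmsB s), volB hz]
      rw [h1, h3]
      exact h2
    · have hz' : ∀ t : ℝ, F2 s t = 0 := fun t =>
        Set.indicator_of_notMem (fun hc => hs hc.1) _
      have : {y | 0 < s ∧ ENNReal.ofReal s < g y} = (∅ : Set M) := by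
        ext y; simp [hs]
      rw [this]
      simp [lintegral_congr hz']
  -- measurability of uncurry F2 and the swap
  have hF2meas : Measurable (Function.uncurry F2) := by
    have hE2 : MeasurableSet {p : ℝ × ℝ | 0 < p.1 ∧
        (0 < p.2 ∧ p.2 < z) ∧ ENNReal.ofReal p.2 < μ {y | ENNReal.ofReal p.1 < g y}} := by
      refine MeasurableSet.inter (measurable_fst measurableSet_Ioi) ?_
      refine MeasurableSet.inter ?_ ?_
      · exact (measurable_snd measurableSet_Ioi).inter (measurable_snd measurableSet_Iio)
      · exact measurableSet_lt (α := ℝ≥0∞) (ENNReal.measurable_ofReal.comp measurable_snd)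
          (hlam_meas.comp measurable_fst)
    have : Function.uncurry F2 = ({p : ℝ × ℝ | 0 < p.1 ∧
        (0 < p.2 ∧ p.2 < z) ∧ ENNReal.ofReal p.2 < μ {y | ENNReal.ofReal p.1 < g y}}).indicator 1 := by
      ext p
      simp [Function.uncurry, hF2def, Set.indicator_apply]
    rw [this]
    exact measurable_one.indicator hE2
  have swap2 : (∫⁻ s, ∫⁻ t, F2 s t) = ∫⁻ t, ∫⁻ s, F2 s t :=
    lintegral_lintegral_swap hF2meas.aemeasurable
  -- the inner integral in s equals the indicator of G
  have inner : ∀ t : ℝ, (∫⁻ s, F2 s t) = (Ioo (0:ℝ) z).indicator G t := by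
    intro t
    by_cases ht : t ∈ Ioo (0:ℝ) z
    · rw [Set.indicator_of_mem ht]
      have hcongr : ∀ s : ℝ, F2 s t
          = ({s' : ℝ | 0 < s' ∧ ENNReal.ofReal s' < G t}).indicator 1 s := by
        intro s
        have hiff : (ENNReal.ofReal t < μ {y | ENNReal.ofReal s < g y})
            ↔ ENNReal.ofReal s < G t := (keyiff μ g (ENNReal.ofReal t) (ENNReal.ofReal s)).symm
        by_cases hs : 0 < s
          <;> by_cases hlt : ENNReal.ofReal s < G t
          <;> simp [hF2def, Set.indicator_apply, hs, hlt, ht.1, ht.2, hiff]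
      rw [lintegral_congr hcongr, lintegral_indicator_one (hmsA (G t)), volA]
    · rw [Set.indicator_of_notMem ht]
      have hz' : ∀ s : ℝ, F2 s t = 0 := fun s =>
        Set.indicator_of_notMem (fun hc => ht (mem_Ioo.2 hc.2.1)) _
      simp [lintegral_congr hz']
  -- put everything together
  have step2 : (∫⁻ y in S, g y ∂μ) ≤ ∫⁻ t in Ioo (0:ℝ) z, G t := by
    calc (∫⁻ y in S, g y ∂μ)
        = ∫⁻ s, (μ.restrict S) {y | 0 < s ∧ ENNReal.ofReal s < g y} := swap1
      _ ≤ ∫⁻ s, ∫⁻ t, F2 s t := lintegral_mono step2b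
      _ = ∫⁻ t, ∫⁻ s, F2 s t := swap2
      _ = ∫⁻ t, (Ioo (0:ℝ) z).indicator G t := lintegral_congr inner
      _ = ∫⁻ t in Ioo (0:ℝ) z, G t := lintegral_indicator measurableSet_Ioo G
  exact step1.trans (mul_le_mul_right step2 _)
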